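/- arXiv:2406.15315 — 2 statements merged into one kernel-verified Lean document; each statement's English description precedes it below -/
import Mathlib

section
/- Let V, H be Hilbert spaces with V continuously embedded in H, and 𝓛 = {ℓ₁,…,ℓ_N} ⊂ V* with completeness defect ε_𝓛 = sup{‖w‖_H : w ∈ V, ℓ_j(w)=0 ∀j, ‖w‖_V ≤ 1}. Then there exists a constant C_𝓛 > 0 such that for every w ∈ V, ‖w‖_H ≤ C_𝓛·max_{1≤j≤N}|ℓ_j(w)| + ε_𝓛·‖w‖_V. -/
set_option maxHeartbeats 1000000 in
/-- Interpolation estimate via the completeness defect: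
`‖w‖_H ≤ C·max_j |ℓ_j w| + ε_𝓛 ‖w‖_V`. -/
theorem stmt_8 {V H : Type*}
    [NormedAddCommGroup V] [InnerProductSpace ℝ V] [CompleteSpace V]
    [NormedAddCommGroup H] [InnerProductSpace ℝ H] [CompleteSpace H]
    (i : V →L[ℝ] H) (hi : Function.Injective i)
    (N : ℕ) (hN : 0 < N) (ℓ : Fin N → V →L[ℝ] ℝ)
    (εL : ℝ)
    (hε : εL = sSup {r : ℝ | ∃ w : V, (∀ j, ℓ j w = 0) ∧ ‖w‖ ≤ 1 ∧ r = ‖i w‖}) :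
    ∃ C : ℝ, 0 < C ∧ ∀ w : V,
      ‖i w‖ ≤ C * (⨆ j : Fin N, |ℓ j w|) + εL * ‖w‖ := by
  haveI : Nonempty (Fin N) := ⟨⟨0, hN⟩⟩
  set S : Set ℝ := {r : ℝ | ∃ w : V, (∀ j, ℓ j w = 0) ∧ ‖w‖ ≤ 1 ∧ r = ‖i w‖} with hS
  have hbdd : BddAbove S := by
    refine ⟨‖i‖, ?_⟩
    rintro r ⟨w, -, hw1, rfl⟩
    calc ‖i w‖ ≤ ‖i‖ * ‖w‖ := i.le_opNorm w
    _ ≤ ‖i‖ * 1 := by nlinarith [norm_nonneg (i : V →L[ℝ] H)]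
    _ = ‖i‖ := mul_one _
  have hε0 : 0 ≤ εL := by
    rw [hε]
    refine le_csSup hbdd ?_
    exact ⟨0, fun j => by simp, by simp, by simp⟩
  -- kernel
  set K : Submodule ℝ V := ⨅ j, LinearMap.ker ((ℓ j : V →ₗ[ℝ] ℝ)) with hK
  have hKc : IsClosed (K : Set V) := by
    rw [hK]
    simp only [Submodule.coe_iInf]
    exact isClosed_iInter fun j => ContinuousLinearMap.isClosed_ker (ℓ j)
  haveI : CompleteSpace K := hKc.completeSpace_coe
  -- estimate on K
  have hker : ∀ q : V, q ∈ K → ‖i q‖ ≤ εL * ‖q‖ := by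
    intro q hq
    have hq0 : ∀ j, ℓ j q = 0 := by
      intro j
      exact (Submodule.mem_iInf _).1 hq j
    rcases eq_or_ne q 0 with rfl | hqne
    · simp
    · have hnq : (0:ℝ) < ‖q‖ := norm_pos_iff.2 hqne
      have hmem : ‖i (‖q‖⁻¹ • q)‖ ∈ S := by
        refine ⟨‖q‖⁻¹ • q, fun j => by simp [hq0 j], ?_, rfl⟩
        rw [norm_smul]
        simp [abs_of_nonneg (inv_nonneg.2 hnq.le), inv_mul_cancel₀ hnq.ne']
      have := le_csSup hbdd hmem
      rw [← hε] at this
      have h2 : ‖i (‖q‖⁻¹ • q)‖ = ‖q‖⁻¹ * ‖i q‖ := by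
        rw [map_smul, norm_smul]
        simp [abs_of_nonneg (inv_nonneg.2 hnq.le)]
      rw [h2] at this
      calc ‖i q‖ = ‖q‖ * (‖q‖⁻¹ * ‖i q‖) := by field_simp
      _ ≤ ‖q‖ * εL := by nlinarith
      _ = εL * ‖q‖ := mul_comm _ _
  -- finite dimensional part
  set Φ : Kᗮ →ₗ[ℝ] (Fin N → ℝ) :=
    LinearMap.pi (fun j => ((ℓ j).toLinearMap).comp Kᗮ.subtype) with hΦ
  have hΦinj : Function.Injective Φ := by
    rw [← LinearMap.ker_eq_bot]
    rw [Submodule.eq_bot_iff]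
    rintro ⟨x, hx⟩ hx0
    have hxK : x ∈ K := by
      rw [hK, Submodule.mem_iInf]
      intro j
      have := congrFun hx0 j
      simpa [hΦ] using this
    have : x = 0 := by
      have := (Submodule.mem_orthogonal K x).1 hx x hxK
      simpa [inner_self_eq_zero] using (Submodule.mem_orthogonal' K x).1 hx x hxK
    simpa using this
  haveI : FiniteDimensional ℝ Kᗮ := FiniteDimensional.of_injective Φ hΦinj
  set e : Kᗮ ≃ₗ[ℝ] LinearMap.range Φ := LinearEquiv.ofInjective Φ hΦinj with he
  set e' : Kᗮ ≃L[ℝ] LinearMap.range Φ := e.toContinuousLinearEquiv with he'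
  set c : ℝ := ‖(e'.symm : LinearMap.range Φ →L[ℝ] Kᗮ)‖ with hc
  have hcnn : 0 ≤ c := norm_nonneg ((e'.symm : LinearMap.range Φ →L[ℝ] Kᗮ))
  have hbound : ∀ x : Kᗮ, ‖x‖ ≤ c * ‖Φ x‖ := by
    intro x
    have h1 : ‖x‖ = ‖e'.symm (e' x)‖ := by simp
    have h2 : ‖e' x‖ = ‖Φ x‖ := rfl
    calc ‖x‖ = ‖e'.symm (e' x)‖ := h1
    _ ≤ c * ‖e' x‖ := (e'.symm : LinearMap.range Φ →L[ℝ] Kᗮ).le_opNorm _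
    _ = c * ‖Φ x‖ := by rw [h2]
  refine ⟨‖i‖ * c + 1, by positivity, ?_⟩
  intro w
  set q : V := (Submodule.orthogonalProjectionOnto K w : V) with hqdef
  set p : V := w - q with hpdef
  have hpmem : p ∈ Kᗮ := K.sub_starProjection_mem_orthogonal w
  have hqmem : q ∈ K := (Submodule.orthogonalProjectionOnto K w).2
  have hortho : (inner ℝ q p : ℝ) = 0 := (Submodule.mem_orthogonal K p).1 hpmem q hqmem
  have hnormq : ‖q‖ ≤ ‖w‖ := by
    have : ‖w‖^2 = ‖q‖^2 + ‖p‖^2 := by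
      have hw : w = q + p := by rw [hpdef]; abel
      rw [hw, norm_add_sq_real, hortho]; ring
    nlinarith [norm_nonneg p, norm_nonneg q, norm_nonneg w]
  -- sup bound
  set M : ℝ := ⨆ j : Fin N, |ℓ j w| with hM
  have hMbdd : BddAbove (Set.range fun j : Fin N => |ℓ j w|) :=
    (Set.finite_range _).bddAbove
  have hM0 : 0 ≤ M := le_ciSup_of_le hMbdd ⟨0, hN⟩ (abs_nonneg _)
  have hΦle : ‖Φ ⟨p, hpmem⟩‖ ≤ M := by
    rw [pi_norm_le_iff_of_nonneg hM0]
    intro j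
    have : ℓ j p = ℓ j w := by
      rw [hpdef, map_sub]
      have : ℓ j q = 0 := (Submodule.mem_iInf _).1 hqmem j
      rw [this]; ring
    simp only [hΦ, LinearMap.pi_apply, LinearMap.comp_apply, Submodule.coe_subtype]
    rw [Real.norm_eq_abs]
    show |ℓ j p| ≤ M
    rw [this]
    exact le_ciSup hMbdd j
  have hpnorm : ‖p‖ ≤ c * M := by
    calc ‖p‖ = ‖(⟨p, hpmem⟩ : Kᗮ)‖ := (Submodule.coe_norm ⟨p, hpmem⟩).symm
    _ ≤ c * ‖Φ ⟨p, hpmem⟩‖ := hbound _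
    _ ≤ c * M := mul_le_mul_of_nonneg_left hΦle hcnn
  have hkerq : ‖i q‖ ≤ εL * ‖q‖ := hker q hqmem
  calc ‖i w‖ = ‖i p + i q‖ := by rw [← map_add, hpdef, sub_add_cancel]
  _ ≤ ‖i p‖ + ‖i q‖ := norm_add_le _ _
  _ ≤ ‖i‖ * ‖p‖ + εL * ‖q‖ := add_le_add (i.le_opNorm p) hkerq
  _ ≤ ‖i‖ * (c * M) + εL * ‖w‖ := by
      have h1 : ‖i‖ * ‖p‖ ≤ ‖i‖ * (c * M) := by nlinarith [norm_nonneg (i : V →L[ℝ] H)]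
      have h2 : εL * ‖q‖ ≤ εL * ‖w‖ := by nlinarith
      linarith
  _ ≤ (‖i‖ * c + 1) * M + εL * ‖w‖ := by nlinarith [norm_nonneg (i : V →L[ℝ] H)]
end

section
/- Let A be positive self-adjoint with discrete spectrum on a Hilbert space H, V = D(A^{1/2}), and suppose two functions u, v ∈ C([0,∞); V) satisfy ‖u(t) − v(t)‖_H ≤ C·max_j |ℓ_j(u(t)) − ℓ_j(v(t))| + ε·‖u(t) − v(t)‖_V for all t (with fixed C, ε > 0 from Theorem on completeness defect), together with the energy inequality (d/dt)‖w‖²_H + α‖w‖²_V ≤ β‖w‖²_H for w = u − v, where α > 0, β > 0, and ε² < α/β. If ∫_t^{t+1} max_j |ℓ_j(u(τ)) − ℓ_j(v(τ))|² dτ → 0 as t → ∞, then ‖u(t) − v(t)‖_H → 0 as t → ∞. -/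
open Filter MeasureTheory intervalIntegral

lemma aux_arith {C ε α β : ℝ} (hC : 0 < C) (hε : 0 < ε) (hα : 0 < α) (hβ : 0 < β)
    (hsmall : ε ^ 2 < α / β) :
    ∃ γ K : ℝ, 0 < γ ∧ 0 ≤ K ∧ ∀ a b c : ℝ, 0 ≤ a → 0 ≤ b → 0 ≤ c →
      a ≤ C * b + ε * c → (β + γ) * a ^ 2 ≤ α * c ^ 2 + K * b ^ 2 := by
  have hβε : β * ε ^ 2 < α := by
    have h := (lt_div_iff₀ hβ).mp hsmall; nlinarith
  set s : ℝ := (α - β * ε ^ 2) / (2 * α) with hs_def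
  have hs : 0 < s := div_pos (by linarith) (by positivity)
  have hs1 : s < 1 := by
    rw [hs_def, div_lt_one (by positivity)]
    nlinarith
  refine ⟨α * (1 - s) / ε ^ 2 - β, α * (1 - s) * C ^ 2 / (s * ε ^ 2), ?_, div_nonneg (mul_nonneg (mul_nonneg hα.le (by linarith)) (sq_nonneg C)) (by positivity), ?_⟩
  · have h1s : 1 - s = (α + β * ε ^ 2) / (2 * α) := by
      rw [hs_def]; field_simp; ring
    rw [sub_pos, lt_div_iff₀ (by positivity : (0:ℝ) < ε ^ 2), h1s]
    have e : α * ((α + β * ε ^ 2) / (2 * α)) = (α + β * ε ^ 2) / 2 := by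
      field_simp
    rw [e]; linarith
  · intro a b c ha hb hc hint
    have h2 : a ^ 2 ≤ (C * b + ε * c) ^ 2 := by nlinarith
    have h3 : s * (1 - s) * a ^ 2 ≤ s * (1 - s) * (C * b + ε * c) ^ 2 := by
      have : 0 ≤ s * (1 - s) := by nlinarith
      nlinarith [mul_le_mul_of_nonneg_left h2 this]
    have h1 : 0 ≤ (s * ε * c - (1 - s) * C * b) ^ 2 := sq_nonneg _
    have key : s * (1 - s) * a ^ 2 ≤ s * ε ^ 2 * c ^ 2 + (1 - s) * C ^ 2 * b ^ 2 := by
      nlinarith [h1, h3]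
    have hpos : 0 < s * ε ^ 2 := by positivity
    rw [← mul_le_mul_iff_right₀ hpos]
    have e1 : s * ε ^ 2 * ((β + (α * (1 - s) / ε ^ 2 - β)) * a ^ 2)
        = α * (s * (1 - s) * a ^ 2) := by field_simp; ring
    have e2 : s * ε ^ 2 * (α * c ^ 2 + α * (1 - s) * C ^ 2 / (s * ε ^ 2) * b ^ 2)
        = α * (s * ε ^ 2 * c ^ 2 + (1 - s) * C ^ 2 * b ^ 2) := by field_simp
    rw [e1, e2]
    exact mul_le_mul_of_nonneg_left key hα.le

set_option maxHeartbeats 1000000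

/-- Asymptotically determining functionals: if the interpolation estimate with
small defect and the energy inequality hold, and the functionals of the
difference of two solutions converge in the averaged sense, then the
difference tends to zero in `H`. -/
theorem stmt_18 {V H : Type*}
    [NormedAddCommGroup V] [InnerProductSpace ℝ V] [CompleteSpace V]
    [NormedAddCommGroup H] [InnerProductSpace ℝ H] [CompleteSpace H]
    (i : V →L[ℝ] H) (N : ℕ) (hN : 0 < N) (ℓ : Fin N → V →L[ℝ] ℝ)
    (C ε α β : ℝ) (hC : 0 < C) (hεpos : 0 < ε) (hα : 0 < α) (hβ : 0 < β)
    (hsmall : ε ^ 2 < α / β)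
    (u v : ℝ → V) (hu : Continuous u) (hv : Continuous v)
    (E' : ℝ → ℝ)
    (hE : ∀ t ≥ (0:ℝ), HasDerivAt (fun s => ‖i (u s - v s)‖ ^ 2) (E' t) t)
    (henergy : ∀ t ≥ (0:ℝ),
      E' t + α * ‖u t - v t‖ ^ 2 ≤ β * ‖i (u t - v t)‖ ^ 2)
    (hinterp : ∀ t ≥ (0:ℝ),
      ‖i (u t - v t)‖ ≤ C * (⨆ j : Fin N, |ℓ j (u t - v t)|)
        + ε * ‖u t - v t‖)
    (hconv : Tendsto
      (fun t => ∫ s in t..(t + 1), (⨆ j : Fin N, |ℓ j (u s) - ℓ j (v s)|) ^ 2)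
      atTop (nhds 0)) :
    Tendsto (fun t => ‖i (u t - v t)‖) atTop (nhds 0) := by
  haveI : Nonempty (Fin N) := ⟨⟨0, hN⟩⟩
  set w : ℝ → V := fun t => u t - v t with hw
  set φ : ℝ → ℝ := fun t => ‖i (w t)‖ ^ 2 with hφ_def
  set η : ℝ → ℝ := fun t => ⨆ j : Fin N, |ℓ j (w t)| with hη_def
  have hwc : Continuous w := hu.sub hv
  have hφc : Continuous φ := ((i.continuous.comp hwc).norm.pow 2)
  have hφnn : ∀ t, 0 ≤ φ t := fun t => sq_nonneg _
  have hηeq : ∀ t, η t = Finset.univ.sup' Finset.univ_nonempty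
      (fun j : Fin N => |ℓ j (w t)|) := fun t =>
    (Finset.sup'_univ_eq_ciSup _).symm
  have hηc : Continuous η := by
    have : Continuous fun t => Finset.univ.sup' Finset.univ_nonempty
        (fun j : Fin N => |ℓ j (w t)|) :=
      Continuous.finset_sup'_apply Finset.univ_nonempty
        (fun j _ => ((ℓ j).continuous.comp hwc).abs)
    simpa [← hηeq] using this
  have hηnn : ∀ t, 0 ≤ η t := by
    intro t
    have : |ℓ ⟨0, hN⟩ (w t)| ≤ η t :=
      le_ciSup (f := fun j : Fin N => |ℓ j (w t)|) (Set.Finite.bddAbove (Set.finite_range _)) ⟨0, hN⟩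
    exact le_trans (abs_nonneg _) this
  have hη2i : ∀ a b : ℝ, IntervalIntegrable (fun τ => η τ ^ 2) volume a b :=
    fun a b => (hηc.pow 2).intervalIntegrable a b
  -- rewrite hconv
  have hconv' : Tendsto (fun t => ∫ s in t..(t + 1), η s ^ 2) atTop (nhds 0) := by
    have : (fun t => ∫ s in t..(t + 1), (⨆ j : Fin N, |ℓ j (u s) - ℓ j (v s)|) ^ 2)
        = fun t => ∫ s in t..(t + 1), η s ^ 2 := by
      funext t
      congr 1
      funext s
      simp only [hη_def, hw, map_sub]
    rwa [this] at hconv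
  obtain ⟨γ, K, hγ, hK, harith⟩ := aux_arith hC hεpos hα hβ hsmall
  have hkey : ∀ t, 0 ≤ t → γ * φ t + E' t ≤ K * η t ^ 2 := by
    intro t ht
    have h1 := henergy t ht
    have h2 := hinterp t ht
    have h3 := harith (‖i (w t)‖) (η t) (‖w t‖) (norm_nonneg _) (hηnn t)
      (norm_nonneg _) h2
    simp only [hφ_def]
    nlinarith [h1, h3]
  -- Gronwall setup
  set g : ℝ → ℝ := fun τ => K * Real.exp (γ * τ) * η τ ^ 2 with hg_def
  have hgc : Continuous g := by
    apply Continuous.mul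
    · exact continuous_const.mul (Real.continuous_exp.comp (continuous_const.mul continuous_id))
    · exact hηc.pow 2
  set G : ℝ → ℝ := fun t => ∫ τ in (0:ℝ)..t, g τ with hG_def
  have hG : ∀ t, HasDerivAt G (g t) t := fun t =>
    (hgc.integral_hasStrictDerivAt 0 t).hasDerivAt
  have hGc : Continuous G := by
    rw [continuous_iff_continuousAt]
    exact fun t => (hG t).continuousAt
  set D : ℝ → ℝ := fun t => Real.exp (γ * t) * φ t - G t with hD_def
  have hexp : ∀ t : ℝ, HasDerivAt (fun s => Real.exp (γ * s)) (γ * Real.exp (γ * t)) t := by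
    intro t
    have h1 : HasDerivAt (fun s : ℝ => γ * s) γ t := by
      simpa using (hasDerivAt_id t).const_mul γ
    simpa [mul_comm] using h1.exp
  have hD : ∀ t, 0 ≤ t →
      HasDerivAt D (Real.exp (γ * t) * (γ * φ t + E' t) - g t) t := by
    intro t ht
    have h1 := ((hexp t).mul (hE t ht)).sub (hG t)
    exact h1.congr_deriv (by ring)
  have hDanti : AntitoneOn D (Set.Ici (0:ℝ)) := by
    apply antitoneOn_of_deriv_nonpos (convex_Ici 0)
    · exact ((Real.continuous_exp.comp (continuous_const.mul continuous_id)).mul hφc).sub hGc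
        |>.continuousOn
    · intro x hx
      rw [interior_Ici] at hx
      exact (hD x (le_of_lt hx)).differentiableAt.differentiableWithinAt
    · intro x hx
      rw [interior_Ici] at hx
      rw [(hD x (le_of_lt hx)).deriv]
      have hk := hkey x (le_of_lt hx)
      have he := Real.exp_pos (γ * x)
      have : Real.exp (γ * x) * (γ * φ x + E' x) ≤ Real.exp (γ * x) * (K * η x ^ 2) :=
        mul_le_mul_of_nonneg_left hk he.le
      simp only [hg_def]
      nlinarith [this]
  -- main Gronwall estimate
  have hmain : ∀ s, 0 ≤ s → ∀ t, s ≤ t → t ≤ s + 1 →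
      φ t ≤ Real.exp (γ * (s - t)) * φ s + K * ∫ τ in s..(s+1), η τ ^ 2 := by
    intro s hs t hst hts
    have ht0 : 0 ≤ t := le_trans hs hst
    have hDle : D t ≤ D s := hDanti (Set.mem_Ici.2 hs) (Set.mem_Ici.2 ht0) hst
    have hGsub : G t - G s = ∫ τ in s..t, g τ := by
      simp only [hG_def]
      exact integral_interval_sub_left (hgc.intervalIntegrable 0 t) (hgc.intervalIntegrable 0 s)
    have hImono : ∫ τ in s..t, g τ ≤ K * Real.exp (γ * t) * ∫ τ in s..(s+1), η τ ^ 2 := by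
      have step1 : ∫ τ in s..t, g τ ≤ ∫ τ in s..t, K * Real.exp (γ * t) * η τ ^ 2 := by
        apply integral_mono_on hst (hgc.intervalIntegrable s t)
          ((continuous_const.mul (hηc.pow 2)).intervalIntegrable s t)
        intro x hx
        simp only [hg_def]
        exact mul_le_mul_of_nonneg_right (mul_le_mul_of_nonneg_left
          (Real.exp_le_exp.2 (mul_le_mul_of_nonneg_left hx.2 hγ.le)) hK) (sq_nonneg _)
      have step2 : ∫ τ in s..t, K * Real.exp (γ * t) * η τ ^ 2
          ≤ K * Real.exp (γ * t) * ∫ τ in s..(s+1), η τ ^ 2 := by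
        rw [intervalIntegral.integral_const_mul]
        apply mul_le_mul_of_nonneg_left _ (by positivity)
        have hsplit : ∫ τ in s..(s+1), η τ ^ 2
            = (∫ τ in s..t, η τ ^ 2) + ∫ τ in t..(s+1), η τ ^ 2 :=
          (integral_add_adjacent_intervals (hη2i s t) (hη2i t (s+1))).symm
        have : 0 ≤ ∫ τ in t..(s+1), η τ ^ 2 :=
          intervalIntegral.integral_nonneg hts (fun x _ => sq_nonneg _)
        linarith [hsplit]
      linarith
    -- from D t ≤ D s : exp(γt) φ t ≤ exp(γs) φ s + (G t - G s)
    have h1 : Real.exp (γ * t) * φ t ≤ Real.exp (γ * s) * φ s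
        + K * Real.exp (γ * t) * ∫ τ in s..(s+1), η τ ^ 2 := by
      simp only [hD_def] at hDle
      linarith [hGsub ▸ (by linarith : G t - G s ≤ 0 + (G t - G s)), hImono]
    have hepos : (0:ℝ) < Real.exp (γ * t) := Real.exp_pos _
    rw [← mul_le_mul_iff_right₀ hepos]
    calc Real.exp (γ * t) * φ t
        ≤ Real.exp (γ * s) * φ s + K * Real.exp (γ * t) * ∫ τ in s..(s+1), η τ ^ 2 := h1
      _ = Real.exp (γ * t) * (Real.exp (γ * (s - t)) * φ s + K * ∫ τ in s..(s+1), η τ ^ 2) := by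
          rw [mul_add, ← mul_assoc, ← Real.exp_add]
          ring_nf
  -- consequences of hmain
  set I : ℝ → ℝ := fun s => ∫ τ in s..(s+1), η τ ^ 2 with hI_def
  have hA : ∀ s, 0 ≤ s → φ (s+1) ≤ Real.exp (-γ) * φ s + K * I s := by
    intro s hs
    have h := hmain s hs (s+1) (by linarith) (by linarith)
    simpa [show γ * (s - (s+1)) = -γ by ring] using h
  have hB : ∀ s, 0 ≤ s → ∀ t, s ≤ t → t ≤ s + 1 → φ t ≤ φ s + K * I s := by
    intro s hs t h1 h2
    have h := hmain s hs t h1 h2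
    have hle : Real.exp (γ * (s - t)) ≤ 1 := Real.exp_le_one_iff.2 (by nlinarith)
    nlinarith [hφnn s, h, hle]
  have hexplt : Real.exp (-γ) < 1 := Real.exp_lt_one_iff.2 (by linarith)
  -- the limit for φ
  have hφ0 : Tendsto φ atTop (nhds 0) := by
    rw [Metric.tendsto_atTop]
    intro δ hδ
    set c₀ : ℝ := 1 - Real.exp (-γ) with hc0_def
    have hc0 : 0 < c₀ := by rw [hc0_def]; linarith
    have hc0' : c₀ ≤ 1 := by have := Real.exp_pos (-γ); rw [hc0_def]; linarith
    set δ' : ℝ := δ * c₀ / (8 * (K + 1)) with hδ'_def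
    have hδ'pos : 0 < δ' := div_pos (mul_pos hδ hc0) (by positivity)
    obtain ⟨T₁, hT₁⟩ := eventually_atTop.1 (hconv'.eventually (gt_mem_nhds hδ'pos))
    set T₀ : ℝ := max T₁ 0 with hT0_def
    have hT₀0 : (0:ℝ) ≤ T₀ := le_max_right _ _
    have hIsmall : ∀ s, T₀ ≤ s → I s ≤ δ' := fun s hs =>
      (hT₁ s (le_trans (le_max_left _ _) hs)).le
    set B' : ℝ := K * δ' / c₀ with hB'_def
    have hB'nn : 0 ≤ B' := div_nonneg (mul_nonneg hK hδ'pos.le) hc0.le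
    have hKδ'c : K * δ' ≤ δ * c₀ / 8 := by
      have h1 : K * δ' = K * δ * c₀ / (8 * (K + 1)) := by rw [hδ'_def]; ring
      rw [h1, div_le_div_iff₀ (by positivity) (by norm_num)]
      nlinarith [mul_nonneg (mul_nonneg hδ.le hc0.le) hK]
    have hKδ' : K * δ' ≤ δ / 8 := by
      have h2 : δ * c₀ ≤ δ * 1 := mul_le_mul_of_nonneg_left hc0' hδ.le
      have h3 : δ * c₀ / 8 ≤ δ / 8 := by nlinarith [h2]
      linarith [hKδ'c, h3]
    have hcB : c₀ * B' = K * δ' := by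
      rw [hB'_def]; field_simp
    have hB'le : B' ≤ δ / 8 := by
      rw [hB'_def, div_le_iff₀ hc0]
      calc K * δ' ≤ δ * c₀ / 8 := hKδ'c
        _ = δ / 8 * c₀ := by ring
    -- geometric decay by induction
    have hind : ∀ n : ℕ, φ (T₀ + n) ≤ Real.exp (-γ) ^ n * φ T₀ + B' := by
      intro n
      induction n with
      | zero =>
        simp only [Nat.cast_zero, add_zero, pow_zero, one_mul]
        linarith [hB'nn]
      | succ n ih =>
        have hs0 : (0:ℝ) ≤ T₀ + n := by positivity
        have hA' := hA (T₀ + n) hs0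
        have hI' := hIsmall (T₀ + n) (le_add_of_nonneg_right n.cast_nonneg)
        have hKI : K * I (T₀ + n) ≤ K * δ' := mul_le_mul_of_nonneg_left hI' hK
        have hcast : T₀ + ((n : ℕ) + 1 : ℕ) = (T₀ + n) + 1 := by push_cast; ring
        rw [hcast]
        have hexpn : (0:ℝ) ≤ Real.exp (-γ) := (Real.exp_pos _).le
        have h2 := mul_le_mul_of_nonneg_left ih hexpn
        have heqB : Real.exp (-γ) * B' + K * δ' = B' := by
          rw [← hcB, hc0_def]; ring
        have hpow : Real.exp (-γ) ^ (n + 1) * φ T₀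
            = Real.exp (-γ) * (Real.exp (-γ) ^ n * φ T₀) := by ring
        calc φ ((T₀ + n) + 1) ≤ Real.exp (-γ) * φ (T₀ + n) + K * I (T₀ + n) := hA'
          _ ≤ Real.exp (-γ) * (Real.exp (-γ) ^ n * φ T₀ + B') + K * δ' := by linarith
          _ = Real.exp (-γ) ^ (n + 1) * φ T₀ + (Real.exp (-γ) * B' + K * δ') := by ring
          _ = Real.exp (-γ) ^ (n + 1) * φ T₀ + B' := by rw [heqB]
    -- choose n₁
    have htend : Tendsto (fun n : ℕ => Real.exp (-γ) ^ n * (φ T₀ + 1)) atTop (nhds 0) := by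
      have h0 : Tendsto (fun n : ℕ => Real.exp (-γ) ^ n) atTop (nhds 0) :=
        tendsto_pow_atTop_nhds_zero_of_lt_one (Real.exp_pos _).le hexplt
      simpa using h0.mul_const (φ T₀ + 1)
    obtain ⟨n₁, hn₁⟩ := eventually_atTop.1
      (htend.eventually (gt_mem_nhds (by linarith : (0:ℝ) < δ / 2)))
    refine ⟨T₀ + n₁, fun t ht => ?_⟩
    have htT : T₀ ≤ t := le_trans (le_add_of_nonneg_right n₁.cast_nonneg) ht
    set n : ℕ := ⌊t - T₀⌋₊ with hn_def
    have hn1 : n₁ ≤ n := Nat.le_floor (by linarith)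
    have hfl : (n:ℝ) ≤ t - T₀ := Nat.floor_le (by linarith)
    have hfl2 : t - T₀ < n + 1 := Nat.lt_floor_add_one _
    have hs0 : (0:ℝ) ≤ T₀ + n := by positivity
    have hb := hB (T₀ + n) hs0 t (by linarith) (by linarith)
    have hIn := hIsmall (T₀ + n) (le_add_of_nonneg_right n.cast_nonneg)
    have hKI : K * I (T₀ + n) ≤ K * δ' := mul_le_mul_of_nonneg_left hIn hK
    have hindn := hind n
    have hmono : Real.exp (-γ) ^ n * φ T₀ ≤ Real.exp (-γ) ^ n₁ * (φ T₀ + 1) := by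
      have h1 : Real.exp (-γ) ^ n ≤ Real.exp (-γ) ^ n₁ :=
        pow_le_pow_of_le_one (Real.exp_pos _).le hexplt.le hn1
      nlinarith [hφnn T₀, pow_nonneg (Real.exp_pos (-γ)).le n]
    have hlt := hn₁ n₁ le_rfl
    rw [Real.dist_eq, sub_zero, abs_of_nonneg (hφnn t)]
    calc φ t ≤ φ (T₀ + n) + K * I (T₀ + n) := hb
      _ ≤ (Real.exp (-γ) ^ n * φ T₀ + B') + K * δ' := by linarith
      _ < δ := by linarith
  -- conclude for the norm
  have heq : (fun t => ‖i (w t)‖) = fun t => Real.sqrt (φ t) := by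
    funext t
    rw [hφ_def]
    exact (Real.sqrt_sq (norm_nonneg _)).symm
  rw [heq]
  have hcomp := (Real.continuous_sqrt.tendsto 0).comp hφ0
  simpa [Function.comp_def] using hcomp
end
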